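/- arXiv:2005.12797 — 2 statements merged into one kernel-verified Lean document; each statement's English description precedes it below -/
import Mathlib

section
/- Approximation quality of the lower-level cutting-plane algorithm: Suppose the lower-level cutting-plane algorithm with tolerance δ ≥ 0 terminates at iteration T with relaxed optimal solution (a_T, v_T, x_T) and revised solution (â, v̂, x̂) = (a_T, v'_T, x_T) where v'_T - v_T ≤ δ and v'_T = (1/(1-β)) Σ_{s∈J_T} p_s(-(r^{(s)})^T Z x_T - a_T) with J_T = {s : -(r^{(s)})^T Z x_T - a_T > 0}. Define f_δ(z) := (1/(2γ)) x_T^T x_T + a_T + v_T and f̂_δ(z) := (1/(2γ)) x̂^T x̂ + â + v̂. Then f(z) - δ ≤ f_δ(z) ≤ f(z) ≤ f̂_δ(z) ≤ f(z) + δ. -/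
open Matrix

/-- Approximation quality of the lower-level cutting-plane algorithm: with
`f(z)` the optimal value (greatest lower bound) of the full lower-level
problem, `(aT, vT, xT)` optimal for the relaxed problem over `K`, revised
value `v'` computed from `J_T = {s : -(r⁽ˢ⁾)ᵀZx_T - a_T > 0}`, and
`v' - vT ≤ δ`, the sandwich
`f(z) - δ ≤ f_δ(z) ≤ f(z) ≤ f̂_δ(z) ≤ f(z) + δ` holds. -/
theorem stmt11 (N M S : ℕ) (γ β δ : ℝ) (hγ : 0 < γ) (hβ : β ∈ Set.Ioo (0:ℝ) 1)
    (hδ : 0 ≤ δ) (p : Fin S → ℝ) (hp : ∀ s, 0 ≤ p s)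
    (r : Fin S → Fin N → ℝ) (A : Matrix (Fin M) (Fin N) ℝ) (b : Fin M → ℝ)
    (z : Fin N → ℝ) (hz : ∀ n, z n = 0 ∨ z n = 1)
    (K : Finset (Finset (Fin S))) (aT vT : ℝ) (xT : Fin N → ℝ) (fz : ℝ)
    -- f(z) is the optimal value of the full lower-level problem
    (hfz : IsGLB {t : ℝ | ∃ (a v : ℝ) (x : Fin N → ℝ),
        (∀ J : Finset (Fin S),
          v ≥ (1/(1-β)) * ∑ s ∈ J, p s * (-(r s ⬝ᵥ (z * x)) - a)) ∧
        v ≥ 0 ∧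
        A *ᵥ (z * x) ≤ b ∧ (∑ n, (z * x) n) = 1 ∧ (∀ n, 0 ≤ (z * x) n) ∧
        t = (1/(2*γ)) * (x ⬝ᵥ x) + a + v} fz)
    -- (aT, vT, xT) is feasible for the relaxed problem over K
    (hfeasK : (∀ J ∈ K,
          vT ≥ (1/(1-β)) * ∑ s ∈ J, p s * (-(r s ⬝ᵥ (z * xT)) - aT)) ∧
        vT ≥ 0 ∧
        A *ᵥ (z * xT) ≤ b ∧ (∑ n, (z * xT) n) = 1 ∧ (∀ n, 0 ≤ (z * xT) n))
    -- and it is optimal for the relaxed problem over K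
    (hopt : ∀ t ∈ {t : ℝ | ∃ (a v : ℝ) (x : Fin N → ℝ),
        (∀ J ∈ K, v ≥ (1/(1-β)) * ∑ s ∈ J, p s * (-(r s ⬝ᵥ (z * x)) - a)) ∧
        v ≥ 0 ∧
        A *ᵥ (z * x) ≤ b ∧ (∑ n, (z * x) n) = 1 ∧ (∀ n, 0 ≤ (z * x) n) ∧
        t = (1/(2*γ)) * (x ⬝ᵥ x) + a + v},
      (1/(2*γ)) * (xT ⬝ᵥ xT) + aT + vT ≤ t)
    (v' : ℝ)
    (hv' : v' = (1/(1-β)) *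
      ∑ s ∈ Finset.univ.filter (fun s => 0 < -(r s ⬝ᵥ (z * xT)) - aT),
        p s * (-(r s ⬝ᵥ (z * xT)) - aT))
    (hgap : v' - vT ≤ δ) :
    fz - δ ≤ (1/(2*γ)) * (xT ⬝ᵥ xT) + aT + vT ∧
    (1/(2*γ)) * (xT ⬝ᵥ xT) + aT + vT ≤ fz ∧
    fz ≤ (1/(2*γ)) * (xT ⬝ᵥ xT) + aT + v' ∧
    (1/(2*γ)) * (xT ⬝ᵥ xT) + aT + v' ≤ fz + δ := by
  obtain ⟨hKfeas, hv0, hAb, hsum, hnn⟩ := hfeasK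
  have hβ1 : (0:ℝ) < 1 - β := by linarith [hβ.2]
  have hc : (0:ℝ) ≤ 1/(1-β) := by positivity
  set g : Fin S → ℝ := fun s => p s * (-(r s ⬝ᵥ (z * xT)) - aT) with hg
  set F := Finset.univ.filter (fun s => 0 < -(r s ⬝ᵥ (z * xT)) - aT) with hF
  -- each J-sum is at most the filtered sum
  have hsum_le : ∀ J : Finset (Fin S), ∑ s ∈ J, g s ≤ ∑ s ∈ F, g s := by
    intro J
    have h1 : ∑ s ∈ J, g s ≤ ∑ s ∈ J.filter (fun s => 0 < -(r s ⬝ᵥ (z * xT)) - aT), g s := by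
      rw [← Finset.sum_filter_add_sum_filter_not J (fun s => 0 < -(r s ⬝ᵥ (z * xT)) - aT)]
      have : ∑ s ∈ J.filter (fun s => ¬ 0 < -(r s ⬝ᵥ (z * xT)) - aT), g s ≤ 0 := by
        apply Finset.sum_nonpos
        intro s hs
        have := (Finset.mem_filter.mp hs).2
        exact mul_nonpos_of_nonneg_of_nonpos (hp s) (by linarith [not_lt.mp this])
      linarith
    refine le_trans h1 (Finset.sum_le_sum_of_subset_of_nonneg ?_ ?_)
    · intro s hs
      simp only [hF, Finset.mem_filter, Finset.mem_univ, true_and]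
      exact (Finset.mem_filter.mp hs).2
    · intro s hs _
      have := (Finset.mem_filter.mp hs).2
      exact mul_nonneg (hp s) (le_of_lt this)
  have hv'0 : 0 ≤ v' := by
    rw [hv']
    apply mul_nonneg hc
    apply Finset.sum_nonneg
    intro s hs
    exact mul_nonneg (hp s) (le_of_lt (Finset.mem_filter.mp hs).2)
  -- (aT, v', xT) is feasible for the full problem
  have hfull : ∀ J : Finset (Fin S), v' ≥ (1/(1-β)) * ∑ s ∈ J, g s := by
    intro J
    rw [hv']
    exact mul_le_mul_of_nonneg_left (hsum_le J) hc
  have hmemfull : (1/(2*γ)) * (xT ⬝ᵥ xT) + aT + v' ∈ {t : ℝ | ∃ (a v : ℝ) (x : Fin N → ℝ),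
        (∀ J : Finset (Fin S),
          v ≥ (1/(1-β)) * ∑ s ∈ J, p s * (-(r s ⬝ᵥ (z * x)) - a)) ∧
        v ≥ 0 ∧
        A *ᵥ (z * x) ≤ b ∧ (∑ n, (z * x) n) = 1 ∧ (∀ n, 0 ≤ (z * x) n) ∧
        t = (1/(2*γ)) * (x ⬝ᵥ x) + a + v} :=
    ⟨aT, v', xT, hfull, hv'0, hAb, hsum, hnn, rfl⟩
  -- fz ≤ f̂
  have h3 : fz ≤ (1/(2*γ)) * (xT ⬝ᵥ xT) + aT + v' := hfz.1 hmemfull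
  -- f_δ ≤ fz : f_δ is a lower bound of the full set
  have h2 : (1/(2*γ)) * (xT ⬝ᵥ xT) + aT + vT ≤ fz := by
    apply hfz.2
    rintro t ⟨a, v, x, hJ, hv0', hAb', hsum', hnn', rfl⟩
    exact hopt _ ⟨a, v, x, fun J _ => hJ J, hv0', hAb', hsum', hnn', rfl⟩
  refine ⟨by linarith, h2, h3, by linarith⟩
end

section
/- Cycling implies δ-optimality: Let f* = min_{z ∈ Z} f(z) over a finite set Z ⊆ {0,1}^N, and suppose the bilevel cutting-plane algorithm generates iterates (z_t, θ_t) where each θ_t is the minimum of θ over all previously added cut constraints θ ≥ f_δ(z_u) + g_δ(z_u)^T(z - z_u), and θ_t ≤ f* for all t (each cut underestimates f on Z). If z_T = z_u for some u < T, then f* ≤ f(z_T) ≤ f* + δ. -/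
/-- Cycling implies δ-optimality: if the iterates of the bilevel cutting-plane
algorithm satisfy the cut-feasibility and lower-bound conditions and the
algorithm revisits an earlier point (`zs T = zs u` with `u < T`), then
`zs T` is δ-optimal: `f* ≤ f(zs T) ≤ f* + δ`. -/
theorem stmt12 (N : ℕ) (δ : ℝ) (hδ : 0 ≤ δ)
    (Z : Set (Fin N → ℝ)) (hZbin : ∀ z ∈ Z, ∀ n, z n = 0 ∨ z n = 1)
    (hZfin : Z.Finite)
    (f fδ : (Fin N → ℝ) → ℝ) (g : (Fin N → ℝ) → (Fin N → ℝ))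
    (fstar : ℝ) (hfstar : IsLeast (f '' Z) fstar)
    (zs : ℕ → (Fin N → ℝ)) (θs : ℕ → ℝ)
    (hmem : ∀ t, zs t ∈ Z)
    -- each θ_t is a lower bound on the optimal value
    (hθlb : ∀ t, θs t ≤ fstar)
    -- (zs t, θs t) satisfies every previously added cut
    (hcut : ∀ u t, u < t →
      θs t ≥ fδ (zs u) + ∑ n, g (zs u) n * (zs t n - zs u n))
    -- fδ is a δ-accurate lower estimate of f
    (hfδ : ∀ z : Fin N → ℝ, f z - δ ≤ fδ z ∧ fδ z ≤ f z)
    (u T : ℕ) (huT : u < T) (hrevisit : zs T = zs u) :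
    fstar ≤ f (zs T) ∧ f (zs T) ≤ fstar + δ := by
  constructor
  · exact hfstar.2 ⟨zs T, hmem T, rfl⟩
  · have h := hcut u T huT
    rw [hrevisit] at h ⊢
    simp only [sub_self, mul_zero, Finset.sum_const_zero, add_zero] at h
    have h1 := (hfδ (zs u)).1
    have h2 := hθlb T
    linarith
end
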